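/- Let n ≥ 1, R > 0, and let I be a nonempty compact subset of (0, ∞). Let μ_i (i ∈ ℕ) and μ be finite Borel measures on ℝ^{n+1} all supported in the closed ball of radius R centered at the origin. If μ_i converges weakly to μ, then the local entropies converge: λ^I(μ_i) → λ^I(μ) as i → ∞. -/

import Mathlib

open MeasureTheory Metric Set Filter

/-- The F-functional `F_{x₀,t₀}(μ) = (4π t₀)^{-n/2} ∫ exp(-‖x-x₀‖²/(4t₀)) dμ(x)`. -/
noncomputable def Ffn (n : ℕ) (μ : Measure (EuclideanSpace ℝ (Fin (n + 1))))
    (x₀ : EuclideanSpace ℝ (Fin (n + 1))) (t₀ : ℝ) : ℝ :=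
  (4 * Real.pi * t₀) ^ (-(n : ℝ) / 2) *
    ∫ x, Real.exp (-‖x - x₀‖ ^ 2 / (4 * t₀)) ∂μ

/-- The local entropy `λ^I(μ) = sup {F_{x₀,t₀}(μ) : x₀ ∈ ℝ^{n+1}, t₀ ∈ I}`. -/
noncomputable def localEntropyR (n : ℕ) (I : Set ℝ)
    (μ : Measure (EuclideanSpace ℝ (Fin (n + 1)))) : ℝ :=
  ⨆ (x₀ : EuclideanSpace ℝ (Fin (n + 1))) (t₀ : I), Ffn n μ x₀ (t₀ : ℝ)

namespace Stmt11

/-- The full heat kernel, as a function of the pair `p = (x₀, t₀)`. -/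
noncomputable def ker {n : ℕ} (a : ℝ) (p : EuclideanSpace ℝ (Fin (n + 1)) × ℝ)
    (x : EuclideanSpace ℝ (Fin (n + 1))) : ℝ :=
  (4 * Real.pi * p.2) ^ a * Real.exp (-‖x - p.1‖ ^ 2 / (4 * p.2))

/-- The F-functional as a function of the pair. -/
noncomputable def Fint (n : ℕ) (ν : Measure (EuclideanSpace ℝ (Fin (n + 1))))
    (p : EuclideanSpace ℝ (Fin (n + 1)) × ℝ) : ℝ :=
  ∫ x, ker (-(n : ℝ) / 2) p x ∂ν

variable {n : ℕ}

lemma Ffn_eq (ν : Measure (EuclideanSpace ℝ (Fin (n + 1))))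
    (x₀ : EuclideanSpace ℝ (Fin (n + 1))) (t₀ : ℝ) :
    Ffn n ν x₀ t₀ = Fint n ν (x₀, t₀) := by
  simp only [Ffn, Fint, ker]
  exact (integral_const_mul _ _).symm

lemma fourpit_pos {t : ℝ} (ht : 0 < t) : 0 < 4 * Real.pi * t := by
  have := Real.pi_pos
  positivity

lemma ker_nonneg {a : ℝ} {p : EuclideanSpace ℝ (Fin (n + 1)) × ℝ} (ht : 0 < p.2)
    (x : EuclideanSpace ℝ (Fin (n + 1))) : 0 ≤ ker a p x :=
  mul_nonneg (Real.rpow_nonneg (fourpit_pos ht).le _) (Real.exp_pos _).le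

lemma ker_le {a : ℝ} {p : EuclideanSpace ℝ (Fin (n + 1)) × ℝ} (ht : 0 < p.2)
    (x : EuclideanSpace ℝ (Fin (n + 1))) : ker a p x ≤ (4 * Real.pi * p.2) ^ a := by
  have h1 : Real.exp (-‖x - p.1‖ ^ 2 / (4 * p.2)) ≤ 1 := by
    rw [Real.exp_le_one_iff]
    apply div_nonpos_of_nonpos_of_nonneg
    · simp [sq_nonneg]
    · linarith
  calc ker a p x ≤ (4 * Real.pi * p.2) ^ a * 1 :=
        mul_le_mul_of_nonneg_left h1 (Real.rpow_nonneg (fourpit_pos ht).le _)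
    _ = (4 * Real.pi * p.2) ^ a := mul_one _

lemma ker_continuous (a : ℝ) (p : EuclideanSpace ℝ (Fin (n + 1)) × ℝ) :
    Continuous (ker a p) := by
  have h : Continuous fun x : EuclideanSpace ℝ (Fin (n + 1)) =>
      -‖x - p.1‖ ^ 2 / (4 * p.2) :=
    (((continuous_id.sub continuous_const).norm.pow 2).neg).div_const _
  exact continuous_const.mul (Real.continuous_exp.comp h)

lemma ker_integrable {a : ℝ} {p : EuclideanSpace ℝ (Fin (n + 1)) × ℝ} (ht : 0 < p.2)
    (ν : Measure (EuclideanSpace ℝ (Fin (n + 1)))) [IsFiniteMeasure ν] :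
    Integrable (ker a p) ν := by
  refine Integrable.mono' (integrable_const ((4 * Real.pi * p.2) ^ a))
    ((ker_continuous a p).aestronglyMeasurable) ?_
  refine Filter.Eventually.of_forall fun x => ?_
  rw [Real.norm_eq_abs, abs_of_nonneg (ker_nonneg ht x)]
  exact ker_le ht x

lemma integral_ker_le {a : ℝ} {p : EuclideanSpace ℝ (Fin (n + 1)) × ℝ} (ht : 0 < p.2)
    (ν : Measure (EuclideanSpace ℝ (Fin (n + 1)))) [IsFiniteMeasure ν] :
    ∫ x, ker a p x ∂ν ≤ (4 * Real.pi * p.2) ^ a * (ν univ).toReal := by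
  calc ∫ x, ker a p x ∂ν ≤ ∫ _x, (4 * Real.pi * p.2) ^ a ∂ν :=
        integral_mono (ker_integrable ht ν) (integrable_const _) (ker_le ht)
    _ = (ν univ).toReal * (4 * Real.pi * p.2) ^ a := by rw [integral_const, smul_eq_mul]; rfl
    _ = (4 * Real.pi * p.2) ^ a * (ν univ).toReal := mul_comm _ _

lemma Fint_crude {tmin t : ℝ} (htmin : 0 < tmin) (hle : tmin ≤ t)
    (ν : Measure (EuclideanSpace ℝ (Fin (n + 1)))) [IsFiniteMeasure ν]
    (x₀ : EuclideanSpace ℝ (Fin (n + 1))) :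
    Fint n ν (x₀, t) ≤ (4 * Real.pi * tmin) ^ (-(n : ℝ) / 2) * (ν univ).toReal := by
  have ht : 0 < t := lt_of_lt_of_le htmin hle
  have ha : (-(n : ℝ) / 2) ≤ 0 := by
    apply div_nonpos_of_nonpos_of_nonneg _ (by norm_num)
    simp
  calc Fint n ν (x₀, t) ≤ (4 * Real.pi * t) ^ (-(n : ℝ) / 2) * (ν univ).toReal :=
        integral_ker_le ht ν
    _ ≤ (4 * Real.pi * tmin) ^ (-(n : ℝ) / 2) * (ν univ).toReal := by
        apply mul_le_mul_of_nonneg_right _ ENNReal.toReal_nonneg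
        exact Real.rpow_le_rpow_of_nonpos (fourpit_pos htmin)
          (by nlinarith [Real.pi_pos]) ha

lemma Fint_nonneg {t : ℝ} (ht : 0 < t)
    (ν : Measure (EuclideanSpace ℝ (Fin (n + 1))))
    (x₀ : EuclideanSpace ℝ (Fin (n + 1))) : 0 ≤ Fint n ν (x₀, t) :=
  integral_nonneg fun x => ker_nonneg ht x

lemma Fint_far {R t : ℝ} (hR : 0 < R) {x₀ : EuclideanSpace ℝ (Fin (n + 1))}
    (hx₀ : 2 * R ≤ ‖x₀‖) (ht : 0 < t)
    (ν : Measure (EuclideanSpace ℝ (Fin (n + 1)))) [IsFiniteMeasure ν]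
    (hν : ν (closedBall (0 : EuclideanSpace ℝ (Fin (n + 1))) R)ᶜ = 0) :
    Fint n ν (x₀, t) ≤ Fint n ν (0, t) := by
  refine integral_mono_ae (ker_integrable ht ν) (ker_integrable ht ν) ?_
  have hsub : {x : EuclideanSpace ℝ (Fin (n + 1)) |
      ¬ ker (-(n : ℝ) / 2) (x₀, t) x ≤ ker (-(n : ℝ) / 2) ((0 : EuclideanSpace ℝ (Fin (n + 1))), t) x}
      ⊆ (closedBall (0 : EuclideanSpace ℝ (Fin (n + 1))) R)ᶜ := by
    intro x hx
    simp only [mem_setOf_eq] at hx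
    intro hxb
    apply hx
    have hxR : ‖x‖ ≤ R := by rwa [mem_closedBall, dist_zero_right] at hxb
    have h1 : ‖x‖ ≤ ‖x - x₀‖ := by
      have h2 : ‖x₀‖ - ‖x‖ ≤ ‖x₀ - x‖ := norm_sub_norm_le _ _
      rw [norm_sub_rev] at h2
      linarith
    have h2 : ‖x‖ ^ 2 ≤ ‖x - x₀‖ ^ 2 := pow_le_pow_left₀ (norm_nonneg x) h1 2
    unfold ker
    apply mul_le_mul_of_nonneg_left _ (Real.rpow_nonneg (fourpit_pos ht).le _)
    apply Real.exp_le_exp.mpr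
    rw [sub_zero]
    have h3 : (0 : ℝ) < 4 * t := by linarith
    exact (div_le_div_iff_of_pos_right h3).mpr (neg_le_neg h2)
  exact (ae_iff (p := fun x => ker (-(n : ℝ) / 2) (x₀, t) x ≤
    ker (-(n : ℝ) / 2) ((0 : EuclideanSpace ℝ (Fin (n + 1))), t) x)).mpr
    (measure_mono_null hsub hν)

/-- A continuous cutoff function which is `1` on the ball of radius `R` and vanishes outside
the ball of radius `2R`. -/
noncomputable def cutoff {n : ℕ} (R : ℝ) (x : EuclideanSpace ℝ (Fin (n + 1))) : ℝ :=
  max 0 (min 1 (2 - ‖x‖ / R))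

lemma cutoff_continuous (R : ℝ) : Continuous (cutoff (n := n) R) :=
  continuous_const.max (continuous_const.min (continuous_const.sub (continuous_norm.div_const R)))

lemma cutoff_eq_one {R : ℝ} (hR : 0 < R) {x : EuclideanSpace ℝ (Fin (n + 1))}
    (hx : ‖x‖ ≤ R) : cutoff R x = 1 := by
  unfold cutoff
  have h1 : ‖x‖ / R ≤ 1 := (div_le_one hR).2 hx
  rw [min_eq_left (by linarith)]
  exact max_eq_right zero_le_one

lemma cutoff_eq_zero {R : ℝ} (hR : 0 < R) {x : EuclideanSpace ℝ (Fin (n + 1))}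
    (hx : ¬ ‖x‖ ≤ 2 * R) : cutoff R x = 0 := by
  unfold cutoff
  push_neg at hx
  have h1 : 2 - ‖x‖ / R < 0 := by
    rw [sub_neg, lt_div_iff₀ hR]
    linarith
  exact max_eq_left (le_trans (min_le_right _ _) h1.le)

lemma cutoff_nonneg (R : ℝ) (x : EuclideanSpace ℝ (Fin (n + 1))) : 0 ≤ cutoff R x :=
  le_max_left _ _

lemma cutoff_le_one (R : ℝ) (x : EuclideanSpace ℝ (Fin (n + 1))) : cutoff R x ≤ 1 :=
  max_le zero_le_one (min_le_left _ _)

lemma cutoff_hasCompactSupport {R : ℝ} (hR : 0 < R) :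
    HasCompactSupport (cutoff (n := n) R) := by
  refine HasCompactSupport.intro (isCompact_closedBall (0 : EuclideanSpace ℝ (Fin (n + 1))) (2 * R))
    fun x hx => cutoff_eq_zero hR ?_
  rwa [mem_closedBall, dist_zero_right] at hx

lemma integral_eq_of_support {R : ℝ} (ν : Measure (EuclideanSpace ℝ (Fin (n + 1))))
    (hν : ν (closedBall (0 : EuclideanSpace ℝ (Fin (n + 1))) R)ᶜ = 0)
    {f g : EuclideanSpace ℝ (Fin (n + 1)) → ℝ}
    (hfg : ∀ x ∈ closedBall (0 : EuclideanSpace ℝ (Fin (n + 1))) R, f x = g x) :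
    ∫ x, f x ∂ν = ∫ x, g x ∂ν := by
  apply integral_congr_ae
  have hsub : {x : EuclideanSpace ℝ (Fin (n + 1)) | ¬ f x = g x}
      ⊆ (closedBall (0 : EuclideanSpace ℝ (Fin (n + 1))) R)ᶜ :=
    fun x hx hxb => hx (hfg x hxb)
  exact (ae_iff (p := fun x => f x = g x)).mpr (measure_mono_null hsub hν)

end Stmt11

open Stmt11

theorem stmt_11 (n : ℕ) (hn : 1 ≤ n) (R : ℝ) (hR : 0 < R)
    (I : Set ℝ) (hne : I.Nonempty) (hcpt : IsCompact I) (hIpos : I ⊆ Ioi (0 : ℝ))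
    (μs : ℕ → Measure (EuclideanSpace ℝ (Fin (n + 1))))
    (μ : Measure (EuclideanSpace ℝ (Fin (n + 1))))
    [∀ i, IsFiniteMeasure (μs i)] [IsFiniteMeasure μ]
    (hsupp_i : ∀ i, μs i (closedBall (0 : EuclideanSpace ℝ (Fin (n + 1))) R)ᶜ = 0)
    (hsupp : μ (closedBall (0 : EuclideanSpace ℝ (Fin (n + 1))) R)ᶜ = 0)
    (hconv : ∀ g : EuclideanSpace ℝ (Fin (n + 1)) → ℝ, Continuous g → HasCompactSupport g →
      Tendsto (fun i => ∫ x, g x ∂(μs i)) atTop (nhds (∫ x, g x ∂μ))) :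
    Tendsto (fun i => localEntropyR n I (μs i)) atTop (nhds (localEntropyR n I μ)) := by
  classical
  haveI : Nonempty I := hne.to_subtype
  -- basic facts about I
  have htminmem : sInf I ∈ I := hcpt.sInf_mem hne
  have htmin : 0 < sInf I := hIpos htminmem
  have htle : ∀ t ∈ I, sInf I ≤ t := fun t ht => csInf_le hcpt.bddBelow ht
  have hIt : ∀ t ∈ I, (0 : ℝ) < t := fun t ht => hIpos ht
  -- the compact parameter set
  set Kc : Set (EuclideanSpace ℝ (Fin (n + 1)) × ℝ) :=
    closedBall (0 : EuclideanSpace ℝ (Fin (n + 1))) (2 * R) ×ˢ I with hKc_def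
  have hKc_ne : Kc.Nonempty :=
    ⟨(0, sInf I), ⟨mem_closedBall_self (by positivity), htminmem⟩⟩
  have hKc_cpt : IsCompact Kc := (isCompact_closedBall _ _).prod hcpt
  have hKcI : ∀ p ∈ Kc, p.2 ∈ I := fun p hp => hp.2
  -- crude bound
  have hcrude : ∀ (ν : Measure (EuclideanSpace ℝ (Fin (n + 1)))) [IsFiniteMeasure ν],
      ∀ (x₀ : EuclideanSpace ℝ (Fin (n + 1))), ∀ t ∈ I,
      Fint n ν (x₀, t) ≤ (4 * Real.pi * sInf I) ^ (-(n : ℝ) / 2) * (ν univ).toReal := by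
    intro ν _ x₀ t ht
    exact Fint_crude htmin (htle t ht) ν x₀
  -- equality of localEntropyR with a sup over the compact set
  have hloc : ∀ (ν : Measure (EuclideanSpace ℝ (Fin (n + 1)))) [IsFiniteMeasure ν],
      ν (closedBall (0 : EuclideanSpace ℝ (Fin (n + 1))) R)ᶜ = 0 →
      localEntropyR n I ν = sSup (Fint n ν '' Kc) := by
    intro ν _ hν
    have hbdd : BddAbove (Fint n ν '' Kc) := by
      refine ⟨(4 * Real.pi * sInf I) ^ (-(n : ℝ) / 2) * (ν univ).toReal, ?_⟩
      rintro y ⟨⟨x₀, t⟩, hp, rfl⟩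
      exact hcrude ν x₀ t hp.2
    have hS_ne : (Fint n ν '' Kc).Nonempty := hKc_ne.image _
    have hle_S : ∀ (x₀ : EuclideanSpace ℝ (Fin (n + 1))), ∀ t ∈ I,
        Fint n ν (x₀, t) ≤ sSup (Fint n ν '' Kc) := by
      intro x₀ t ht
      by_cases hx : ‖x₀‖ ≤ 2 * R
      · exact le_csSup hbdd ⟨(x₀, t), ⟨mem_closedBall_zero_iff.mpr hx, ht⟩, rfl⟩
      · push_neg at hx
        refine le_trans (Fint_far hR hx.le (hIt t ht) ν hν) ?_
        exact le_csSup hbdd ⟨(0, t), ⟨mem_closedBall_self (by positivity), ht⟩, rfl⟩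
    apply le_antisymm
    · apply ciSup_le
      intro x₀
      apply ciSup_le
      intro t
      simp only [Ffn_eq]
      exact hle_S x₀ t t.2
    · apply csSup_le hS_ne
      rintro y ⟨⟨x₀, t⟩, hp, rfl⟩
      have hinner : Fint n ν (x₀, t) ≤ ⨆ t₀ : I, Ffn n ν x₀ (t₀ : ℝ) := by
        have hb : BddAbove (range fun t₀ : I => Ffn n ν x₀ (t₀ : ℝ)) := by
          refine ⟨sSup (Fint n ν '' Kc), ?_⟩
          rintro z ⟨t₀, rfl⟩
          simp only [Ffn_eq]
          exact hle_S x₀ t₀ t₀.2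
        have := le_ciSup hb (⟨t, hp.2⟩ : I)
        rwa [Ffn_eq] at this
      refine le_trans hinner ?_
      apply le_ciSup (f := fun x₀ => ⨆ t₀ : I, Ffn n ν x₀ (t₀ : ℝ))
      refine ⟨sSup (Fint n ν '' Kc), ?_⟩
      rintro z ⟨x₁, rfl⟩
      apply ciSup_le
      intro t₀
      simp only [Ffn_eq]
      exact hle_S x₁ t₀ t₀.2
  -- pointwise convergence
  have hpt : ∀ p : EuclideanSpace ℝ (Fin (n + 1)) × ℝ, p.2 ∈ I →
      Tendsto (fun i => Fint n (μs i) p) atTop (nhds (Fint n μ p)) := by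
    intro p hpI
    have ht : 0 < p.2 := hIt _ hpI
    set g : EuclideanSpace ℝ (Fin (n + 1)) → ℝ :=
      fun x => ker (-(n : ℝ) / 2) p x * cutoff R x with hg_def
    have hg_cont : Continuous g := (ker_continuous _ p).mul (cutoff_continuous R)
    have hg_supp : HasCompactSupport g := by
      refine HasCompactSupport.intro
        (isCompact_closedBall (0 : EuclideanSpace ℝ (Fin (n + 1))) (2 * R)) fun x hx => ?_
      simp only [hg_def]
      rw [cutoff_eq_zero hR (by rwa [mem_closedBall, dist_zero_right] at hx), mul_zero]
    have key : ∀ (ν : Measure (EuclideanSpace ℝ (Fin (n + 1)))),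
        ν (closedBall (0 : EuclideanSpace ℝ (Fin (n + 1))) R)ᶜ = 0 →
        ∫ x, g x ∂ν = Fint n ν p := by
      intro ν hν
      refine integral_eq_of_support ν hν fun x hx => ?_
      simp only [hg_def]
      rw [mem_closedBall, dist_zero_right] at hx
      rw [cutoff_eq_one hR hx, mul_one]
    have := hconv g hg_cont hg_supp
    rw [key μ hsupp] at this
    exact this.congr fun i => key (μs i) (hsupp_i i)
  -- convergence of masses and a uniform mass bound
  have hmass : Tendsto (fun i => ((μs i) univ).toReal) atTop (nhds ((μ univ).toReal)) := by
    have := hconv (cutoff R) (cutoff_continuous R) (cutoff_hasCompactSupport hR)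
    have key : ∀ (ν : Measure (EuclideanSpace ℝ (Fin (n + 1)))) [IsFiniteMeasure ν],
        ν (closedBall (0 : EuclideanSpace ℝ (Fin (n + 1))) R)ᶜ = 0 →
        ∫ x, cutoff R x ∂ν = (ν univ).toReal := by
      intro ν _ hν
      have h1 : ∫ x, cutoff R x ∂ν = ∫ _x, (1 : ℝ) ∂ν := by
        refine integral_eq_of_support ν hν fun x hx => ?_
        rw [mem_closedBall, dist_zero_right] at hx
        exact cutoff_eq_one hR hx
      rw [h1, integral_const, smul_eq_mul, mul_one]; rfl
    rw [key μ hsupp] at this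
    exact this.congr fun i => key (μs i) (hsupp_i i)
  obtain ⟨M₀, hM₀⟩ := hmass.bddAbove_range
  set M : ℝ := max M₀ ((μ univ).toReal) + 1 with hM_def
  have hM_pos : 0 < M := by
    have : (0 : ℝ) ≤ (μ univ).toReal := ENNReal.toReal_nonneg
    have : (0 : ℝ) ≤ max M₀ ((μ univ).toReal) := le_trans this (le_max_right _ _)
    linarith
  have hM_i : ∀ i, ((μs i) univ).toReal ≤ M := by
    intro i
    have : ((μs i) univ).toReal ≤ M₀ := hM₀ ⟨i, rfl⟩
    have h2 : M₀ ≤ max M₀ ((μ univ).toReal) := le_max_left _ _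
    linarith
  have hM_μ : (μ univ).toReal ≤ M := by
    have h2 : (μ univ).toReal ≤ max M₀ ((μ univ).toReal) := le_max_right _ _
    linarith
  -- uniform continuity of the kernel on the compact set
  set s : Set ((EuclideanSpace ℝ (Fin (n + 1)) × ℝ) × EuclideanSpace ℝ (Fin (n + 1))) :=
    Kc ×ˢ closedBall (0 : EuclideanSpace ℝ (Fin (n + 1))) R with hs_def
  have hs_cpt : IsCompact s := hKc_cpt.prod (isCompact_closedBall _ _)
  have hH_cont : ContinuousOn
      (fun q : (EuclideanSpace ℝ (Fin (n + 1)) × ℝ) × EuclideanSpace ℝ (Fin (n + 1)) =>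
        ker (-(n : ℝ) / 2) q.1 q.2) s := by
    intro q hq
    have hqt : 0 < q.1.2 := hIt _ (hq.1.2)
    apply ContinuousAt.continuousWithinAt
    have h1 : ContinuousAt (fun q' : (EuclideanSpace ℝ (Fin (n + 1)) × ℝ) ×
        EuclideanSpace ℝ (Fin (n + 1)) => (4 * Real.pi * q'.1.2) ^ (-(n : ℝ) / 2)) q := by
      apply ContinuousAt.rpow_const
      · exact (continuous_const.mul (continuous_fst.snd)).continuousAt
      · exact Or.inl (ne_of_gt (fourpit_pos hqt))
    have h2 : ContinuousAt (fun q' : (EuclideanSpace ℝ (Fin (n + 1)) × ℝ) ×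
        EuclideanSpace ℝ (Fin (n + 1)) =>
        Real.exp (-‖q'.2 - q'.1.1‖ ^ 2 / (4 * q'.1.2))) q := by
      apply Real.continuous_exp.continuousAt.comp
      apply ContinuousAt.div
      · exact (((continuous_snd.sub continuous_fst.fst).norm.pow 2).neg).continuousAt
      · exact (continuous_const.mul continuous_fst.snd).continuousAt
      · exact ne_of_gt (by linarith)
    exact h1.mul h2
  have hUC := hs_cpt.uniformContinuousOn_of_continuous hH_cont
  -- uniform convergence of Fint over Kc
  have hunif : ∀ ε > (0 : ℝ), ∀ᶠ i in atTop, ∀ p ∈ Kc,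
      |Fint n (μs i) p - Fint n μ p| ≤ ε := by
    intro ε hε
    set ε' : ℝ := ε / (3 * M) with hε'_def
    have hε' : 0 < ε' := by positivity
    obtain ⟨δ, hδ, hδ'⟩ := (Metric.uniformContinuousOn_iff.mp hUC) ε' hε'
    -- difference bound within one measure
    have hdiff : ∀ (ν : Measure (EuclideanSpace ℝ (Fin (n + 1)))) [IsFiniteMeasure ν],
        ν (closedBall (0 : EuclideanSpace ℝ (Fin (n + 1))) R)ᶜ = 0 →
        (ν univ).toReal ≤ M →
        ∀ p ∈ Kc, ∀ q ∈ Kc, dist p q < δ →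
        |Fint n ν p - Fint n ν q| ≤ ε / 3 := by
      intro ν _ hν hmassν p hp q hq hpq
      have hpt' : 0 < p.2 := hIt _ hp.2
      have hqt' : 0 < q.2 := hIt _ hq.2
      have hint : ∫ x, ker (-(n : ℝ) / 2) p x ∂ν - ∫ x, ker (-(n : ℝ) / 2) q x ∂ν
          = ∫ x, (ker (-(n : ℝ) / 2) p x - ker (-(n : ℝ) / 2) q x) ∂ν :=
        (integral_sub (ker_integrable hpt' ν) (ker_integrable hqt' ν)).symm
      have hae : ∀ᵐ x ∂ν, ‖ker (-(n : ℝ) / 2) p x - ker (-(n : ℝ) / 2) q x‖ ≤ ε' := by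
        have hsub : {x : EuclideanSpace ℝ (Fin (n + 1)) |
            ¬ ‖ker (-(n : ℝ) / 2) p x - ker (-(n : ℝ) / 2) q x‖ ≤ ε'}
            ⊆ (closedBall (0 : EuclideanSpace ℝ (Fin (n + 1))) R)ᶜ := by
          intro x hx
          simp only [mem_setOf_eq] at hx
          intro hxb
          apply hx
          have h1 : (p, x) ∈ s := ⟨hp, hxb⟩
          have h2 : (q, x) ∈ s := ⟨hq, hxb⟩
          have h3 : dist ((p, x) : (EuclideanSpace ℝ (Fin (n + 1)) × ℝ) ×
              EuclideanSpace ℝ (Fin (n + 1))) (q, x) < δ := by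
            rw [Prod.dist_eq]
            simp only [dist_self]
            rw [max_eq_left dist_nonneg]
            exact hpq
          have := hδ' (p, x) h1 (q, x) h2 h3
          rw [Real.dist_eq] at this
          rw [Real.norm_eq_abs, ← Real.dist_eq]
          exact this.le
        exact (ae_iff (p := fun x =>
          ‖ker (-(n : ℝ) / 2) p x - ker (-(n : ℝ) / 2) q x‖ ≤ ε')).mpr
          (measure_mono_null hsub hν)
      have hb := norm_integral_le_of_norm_le_const hae
      rw [← hint] at hb
      rw [Real.norm_eq_abs] at hb
      calc |Fint n ν p - Fint n ν q| ≤ ε' * (ν univ).toReal := hb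
        _ ≤ ε' * M := mul_le_mul_of_nonneg_left hmassν hε'.le
        _ = ε / 3 := by
            rw [hε'_def]
            field_simp
    -- finite subcover
    have hcover : Kc ⊆ ⋃ j : Kc, ball (j : EuclideanSpace ℝ (Fin (n + 1)) × ℝ) δ := by
      intro p hp
      exact mem_iUnion.mpr ⟨⟨p, hp⟩, mem_ball_self hδ⟩
    obtain ⟨T, hT⟩ := hKc_cpt.elim_finite_subcover
      (fun j : Kc => ball (j : EuclideanSpace ℝ (Fin (n + 1)) × ℝ) δ)
      (fun j => isOpen_ball) hcover
    -- eventual closeness at the centers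
    have hev : ∀ᶠ i in atTop, ∀ j ∈ T,
        |Fint n (μs i) (j : EuclideanSpace ℝ (Fin (n + 1)) × ℝ) -
          Fint n μ (j : EuclideanSpace ℝ (Fin (n + 1)) × ℝ)| < ε / 3 := by
      have h3 : (0 : ℝ) < ε / 3 := by linarith
      have key : ∀ j : Kc, ∀ᶠ i in atTop,
          |Fint n (μs i) (j : EuclideanSpace ℝ (Fin (n + 1)) × ℝ) -
            Fint n μ (j : EuclideanSpace ℝ (Fin (n + 1)) × ℝ)| < ε / 3 := by
        intro j
        have := Metric.tendsto_nhds.mp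
          (hpt (j : EuclideanSpace ℝ (Fin (n + 1)) × ℝ) j.2.2) (ε / 3) h3
        exact this.mono fun i hi => by rwa [Real.dist_eq] at hi
      exact (eventually_all_finite T.finite_toSet).mpr fun j _ => key j
    filter_upwards [hev] with i hi
    intro p hp
    obtain ⟨j, hjT, hjp⟩ := mem_iUnion₂.mp (hT hp)
    rw [mem_ball] at hjp
    have hjKc : (j : EuclideanSpace ℝ (Fin (n + 1)) × ℝ) ∈ Kc := j.2
    have hd1 : |Fint n (μs i) p - Fint n (μs i) (j : EuclideanSpace ℝ (Fin (n + 1)) × ℝ)|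
        ≤ ε / 3 := hdiff (μs i) (hsupp_i i) (hM_i i) p hp _ hjKc hjp
    have hd2 : |Fint n (μs i) (j : EuclideanSpace ℝ (Fin (n + 1)) × ℝ) -
        Fint n μ (j : EuclideanSpace ℝ (Fin (n + 1)) × ℝ)| < ε / 3 := hi j hjT
    have hd3 : |Fint n μ (j : EuclideanSpace ℝ (Fin (n + 1)) × ℝ) - Fint n μ p|
        ≤ ε / 3 := hdiff μ hsupp hM_μ _ hjKc p hp (by rwa [dist_comm])
    calc |Fint n (μs i) p - Fint n μ p|
        ≤ |Fint n (μs i) p - Fint n (μs i) (j : EuclideanSpace ℝ (Fin (n + 1)) × ℝ)| +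
          |Fint n (μs i) (j : EuclideanSpace ℝ (Fin (n + 1)) × ℝ) - Fint n μ p| :=
          abs_sub_le _ _ _
      _ ≤ |Fint n (μs i) p - Fint n (μs i) (j : EuclideanSpace ℝ (Fin (n + 1)) × ℝ)| +
          (|Fint n (μs i) (j : EuclideanSpace ℝ (Fin (n + 1)) × ℝ) -
            Fint n μ (j : EuclideanSpace ℝ (Fin (n + 1)) × ℝ)| +
           |Fint n μ (j : EuclideanSpace ℝ (Fin (n + 1)) × ℝ) - Fint n μ p|) := by
          have := abs_sub_le (Fint n (μs i) (j : EuclideanSpace ℝ (Fin (n + 1)) × ℝ))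
            (Fint n μ (j : EuclideanSpace ℝ (Fin (n + 1)) × ℝ)) (Fint n μ p)
          linarith
      _ ≤ ε / 3 + (ε / 3 + ε / 3) := by
          have := hd2.le
          gcongr
      _ = ε := by ring
  -- boundedness of the image sets
  have hbdd_i : ∀ (ν : Measure (EuclideanSpace ℝ (Fin (n + 1)))) [IsFiniteMeasure ν],
      BddAbove (Fint n ν '' Kc) := by
    intro ν _
    refine ⟨(4 * Real.pi * sInf I) ^ (-(n : ℝ) / 2) * (ν univ).toReal, ?_⟩
    rintro y ⟨⟨x₀, t⟩, hp, rfl⟩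
    exact hcrude ν x₀ t hp.2
  -- conclusion: convergence of suprema
  rw [hloc μ hsupp]
  have hall : ∀ i, localEntropyR n I (μs i) = sSup (Fint n (μs i) '' Kc) :=
    fun i => hloc (μs i) (hsupp_i i)
  rw [Metric.tendsto_atTop]
  intro ε hε
  have h2 : (0 : ℝ) < ε / 2 := by linarith
  obtain ⟨N, hN⟩ := eventually_atTop.mp (hunif (ε / 2) h2)
  refine ⟨N, fun i hi => ?_⟩
  rw [hall i, Real.dist_eq]
  have hclose := hN i hi
  have hne_img1 : (Fint n (μs i) '' Kc).Nonempty := hKc_ne.image _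
  have hne_img2 : (Fint n μ '' Kc).Nonempty := hKc_ne.image _
  have hb1 := hbdd_i (μs i)
  have hb2 := hbdd_i μ
  have hub1 : sSup (Fint n (μs i) '' Kc) ≤ sSup (Fint n μ '' Kc) + ε / 2 := by
    apply csSup_le hne_img1
    rintro y ⟨p, hp, rfl⟩
    have h1 := abs_le.mp (hclose p hp)
    have h2' := le_csSup hb2 (mem_image_of_mem (Fint n μ) hp)
    linarith [h1.2]
  have hub2 : sSup (Fint n μ '' Kc) ≤ sSup (Fint n (μs i) '' Kc) + ε / 2 := by
    apply csSup_le hne_img2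
    rintro y ⟨p, hp, rfl⟩
    have h1 := abs_le.mp (hclose p hp)
    have h2' := le_csSup hb1 (mem_image_of_mem (Fint n (μs i)) hp)
    linarith [h1.1]
  have habs : |sSup (Fint n (μs i) '' Kc) - sSup (Fint n μ '' Kc)| ≤ ε / 2 :=
    abs_le.mpr ⟨by linarith, by linarith⟩
  linarith
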